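/- For a ≥ 2, the graph K_4(a-2, a-1, a+1, a+2) obtained from the complete graph K_4 by attaching pendant paths of lengths a-2, a-1, a+1, a+2 to its four vertices respectively is transmission irregular if and only if a ≢ 2 (mod 3). -/
import Mathlib


/-- The transmission of a vertex: sum of distances to all other vertices. -/
noncomputable def transmission {V : Type*} [Fintype V] (G : SimpleGraph V) (v : V) : ℕ :=
  ∑ u : V, G.dist v u

/-- Arm lengths of `K₄(a-2, a-1, a+1, a+2)`. -/
def armLen (a : ℕ) : Fin 4 → ℕ := ![a - 2, a - 1, a + 1, a + 2]

/-- Vertex set: `Fin 4` is the core `K₄`, and `⟨i, j⟩` is the `(j+1)`-st vertex of the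
pendant path attached at core vertex `i`. -/
abbrev KVert (a : ℕ) : Type := Fin 4 ⊕ (Σ i : Fin 4, Fin (armLen a i))

/-- The graph `K₄(a-2, a-1, a+1, a+2)`: the complete graph `K₄` with pendant paths of
lengths `a-2`, `a-1`, `a+1`, `a+2` attached at its four vertices. -/
def Kgraph (a : ℕ) : SimpleGraph (KVert a) :=
  SimpleGraph.fromRel (fun x y =>
    match x, y with
    | Sum.inl c, Sum.inl c' => c ≠ c'
    | Sum.inl c, Sum.inr q => c = q.1 ∧ (q.2 : ℕ) = 0
    | Sum.inr q, Sum.inr q' => q.1 = q'.1 ∧ (q'.2 : ℕ) = (q.2 : ℕ) + 1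
    | _, _ => False)

namespace KP

variable {a : ℕ}

def D : KVert a → KVert a → ℕ
  | .inl c, .inl c' => if c = c' then 0 else 1
  | .inl c, .inr q => (q.2 : ℕ) + 1 + (if c = q.1 then 0 else 1)
  | .inr q, .inl c => (q.2 : ℕ) + 1 + (if c = q.1 then 0 else 1)
  | .inr q, .inr q' => if q.1 = q'.1 then ((q.2 : ℕ) - (q'.2 : ℕ)) + ((q'.2 : ℕ) - (q.2 : ℕ))
      else (q.2 : ℕ) + (q'.2 : ℕ) + 3

lemma D_self (x : KVert a) : D x x = 0 := by
  rcases x with c | ⟨i, j⟩ <;> simp [D]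

lemma D_eq_zero {x y : KVert a} (h : D x y = 0) : x = y := by
  rcases x with c | ⟨i, j⟩ <;> rcases y with c' | ⟨i', j'⟩ <;>
    simp only [D] at h <;> split_ifs at h with hc <;> try omega
  · subst hc; rfl
  · subst hc
    simp only [Sum.inr.injEq, Sigma.mk.inj_iff, heq_eq_eq, true_and]
    exact Fin.ext (by omega)

lemma adj_iff {x y : KVert a} : (Kgraph a).Adj x y ↔ x ≠ y ∧
    ((match x, y with
    | Sum.inl c, Sum.inl c' => c ≠ c'
    | Sum.inl c, Sum.inr q => c = q.1 ∧ (q.2 : ℕ) = 0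
    | Sum.inr q, Sum.inr q' => q.1 = q'.1 ∧ (q'.2 : ℕ) = (q.2 : ℕ) + 1
    | _, _ => False) ∨
    (match y, x with
    | Sum.inl c, Sum.inl c' => c ≠ c'
    | Sum.inl c, Sum.inr q => c = q.1 ∧ (q.2 : ℕ) = 0
    | Sum.inr q, Sum.inr q' => q.1 = q'.1 ∧ (q'.2 : ℕ) = (q.2 : ℕ) + 1
    | _, _ => False)) := by
  rw [Kgraph, SimpleGraph.fromRel_adj]


lemma D_le_adj {x x' : KVert a} (h : (Kgraph a).Adj x x') (y : KVert a) :
    D x y ≤ D x' y + 1 := by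
  rw [adj_iff] at h
  obtain ⟨hne, h⟩ := h
  rcases x with c | ⟨i, j⟩ <;> rcases x' with c' | ⟨i', j'⟩ <;> rcases y with e | ⟨m, n⟩ <;>
      simp only [D] <;> rcases h with h | h <;> (try cases h) <;> split_ifs <;>
      simp_all <;> omega


lemma D_step (x y : KVert a) (h : D x y ≠ 0) :
    ∃ x', (Kgraph a).Adj x x' ∧ D x' y + 1 = D x y := by
  rcases x with c | ⟨i, j⟩ <;> rcases y with e | ⟨m, n⟩
  · -- core to core
    have hc : c ≠ e := by simp only [D] at h; split_ifs at h with hc <;> simp_all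
    exact ⟨Sum.inl e, adj_iff.mpr ⟨by simp [hc], Or.inl hc⟩, by simp [D, hc]⟩
  · -- core to arm
    by_cases hc : c = m
    · subst hc
      refine ⟨Sum.inr ⟨c, ⟨0, n.pos⟩⟩, adj_iff.mpr ⟨by simp, Or.inl ⟨rfl, rfl⟩⟩, ?_⟩
      simp [D]
    · refine ⟨Sum.inl m, adj_iff.mpr ⟨by simp [hc], Or.inl hc⟩, ?_⟩
      simp [D, hc]
  · -- arm to core
    by_cases hj : (j : ℕ) = 0
    · refine ⟨Sum.inl i, adj_iff.mpr ⟨by simp, Or.inr ⟨rfl, hj⟩⟩, ?_⟩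
      simp only [D, hj]
      split_ifs with h1 h2 h2 <;>
        first
          | omega
          | (exact absurd h1.symm h2)
          | (exact absurd h2.symm h1)
    · refine ⟨Sum.inr ⟨i, ⟨(j : ℕ) - 1, by omega⟩⟩,
        adj_iff.mpr ⟨?_, Or.inr ⟨rfl, by simp; omega⟩⟩, ?_⟩
      · simp [Fin.ext_iff] <;> omega
      · simp only [D]; split_ifs <;> omega
  · -- arm to arm
    by_cases him : i = m
    · subst him
      have hjn : (j : ℕ) ≠ (n : ℕ) := by
        simp only [D] at h; split_ifs at h <;> omega
      rcases lt_or_gt_of_ne hjn with hlt | hgt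
      · refine ⟨Sum.inr ⟨i, ⟨(j : ℕ) + 1, by omega⟩⟩,
          adj_iff.mpr ⟨?_, Or.inl ⟨rfl, by simp⟩⟩, ?_⟩
        · simp [Fin.ext_iff] <;> omega
        · simp only [D]; split_ifs <;> simp_all <;> omega
      · refine ⟨Sum.inr ⟨i, ⟨(j : ℕ) - 1, by omega⟩⟩,
          adj_iff.mpr ⟨?_, Or.inr ⟨rfl, by simp; omega⟩⟩, ?_⟩
        · simp [Fin.ext_iff] <;> omega
        · simp only [D]; split_ifs <;> simp_all <;> omega
    · by_cases hj : (j : ℕ) = 0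
      · refine ⟨Sum.inl i, adj_iff.mpr ⟨by simp, Or.inr ⟨rfl, hj⟩⟩, ?_⟩
        simp only [D]
        split_ifs <;> simp_all <;> omega
      · refine ⟨Sum.inr ⟨i, ⟨(j : ℕ) - 1, by omega⟩⟩,
          adj_iff.mpr ⟨?_, Or.inr ⟨rfl, by simp; omega⟩⟩, ?_⟩
        · simp [Fin.ext_iff] <;> omega
        · simp only [D]; split_ifs <;> simp_all <;> omega

lemma exists_walk (n : ℕ) : ∀ x y : KVert a, D x y = n →
    ∃ p : (Kgraph a).Walk x y, p.length = n := by
  induction n with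
  | zero =>
    intro x y h; obtain rfl := D_eq_zero h; exact ⟨.nil, rfl⟩
  | succ n ih =>
    intro x y h
    obtain ⟨x', hadj, hD⟩ := D_step x y (by omega)
    obtain ⟨p, hp⟩ := ih x' y (by omega)
    exact ⟨.cons hadj p, by simp [hp]⟩

lemma D_le_length {x y : KVert a} (p : (Kgraph a).Walk x y) : D x y ≤ p.length := by
  induction p with
  | nil => simp [D_self]
  | @cons u v w hadj p ih =>
    have := D_le_adj hadj w
    simp only [SimpleGraph.Walk.length_cons]
    omega

lemma dist_eq (x y : KVert a) : (Kgraph a).dist x y = D x y := by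
  obtain ⟨p, hp⟩ := exists_walk (D x y) x y rfl
  refine le_antisymm (hp ▸ SimpleGraph.dist_le p) ?_
  obtain ⟨q, hq⟩ := SimpleGraph.Reachable.exists_walk_length_eq_dist ⟨p⟩
  exact hq ▸ D_le_length q


lemma sum_lin (k c : ℕ) : 2 * ∑ x ∈ Finset.range k, (x + c) + k = k * k + 2 * k * c := by
  induction k with
  | zero => simp
  | succ k ih =>
    rw [Finset.sum_range_succ]
    zify at ih ⊢
    linear_combination ih

lemma sum_left (j k : ℕ) (h : j < k) :
    ∑ x ∈ Finset.range k, (j - x) = ∑ x ∈ Finset.range (j + 1), x := by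
  rw [← Finset.sum_subset (Finset.range_subset_range.mpr h)
      (fun x _ hx => by simp only [Finset.mem_range] at hx; omega)]
  rw [← Finset.sum_range_reflect (fun x => x) (j + 1)]
  exact Finset.sum_congr rfl fun x hx => by omega

lemma sum_right (j k : ℕ) (h : j < k) :
    ∑ x ∈ Finset.range k, (x - j) = ∑ x ∈ Finset.range (k - j), x := by
  have h1 : ∑ x ∈ Finset.range k, (x - j) = ∑ x ∈ Finset.range k, (k - 1 - j - x) := by
    rw [← Finset.sum_range_reflect (fun x => x - j) k]
    exact Finset.sum_congr rfl fun x hx => by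
      simp only [Finset.mem_range] at hx; omega
  rw [h1, sum_left (k - 1 - j) k (by omega), show k - 1 - j + 1 = k - j from by omega]

lemma sum_absdiff (k j : ℕ) (h : j < k) :
    2 * ∑ x ∈ Finset.range k, ((j - x) + (x - j))
      = j * (j + 1) + (k - 1 - j) * (k - j) := by
  rw [Finset.sum_add_distrib, sum_left j k h, sum_right j k h]
  have g1 := Finset.sum_range_id_mul_two (j + 1)
  have g2 := Finset.sum_range_id_mul_two (k - j)
  calc 2 * ((∑ x ∈ Finset.range (j+1), x) + ∑ x ∈ Finset.range (k-j), x)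
      = (∑ x ∈ Finset.range (j+1), x) * 2 + (∑ x ∈ Finset.range (k-j), x) * 2 := by ring
    _ = (j + 1) * (j + 1 - 1) + (k - j) * (k - j - 1) := by rw [g1, g2]
    _ = j * (j + 1) + (k - 1 - j) * (k - j) := by
        rw [show j + 1 - 1 = j from rfl, show k - j - 1 = k - 1 - j from by omega]
        ring

lemma trans_decomp (v : KVert a) :
    transmission (Kgraph a) v =
      (∑ c : Fin 4, D v (Sum.inl c)) +
        ∑ i : Fin 4, ∑ j' : Fin (armLen a i), D v (Sum.inr ⟨i, j'⟩) := by
  unfold transmission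
  simp only [dist_eq]
  rw [Fintype.sum_sum_type]
  congr 1
  rw [← Finset.univ_sigma_univ, Finset.sum_sigma]

lemma core_arm_sum (a : ℕ) (c m : Fin 4) (k : ℕ) (hk : armLen a m = k) :
    2 * (∑ j' : Fin (armLen a m), D (Sum.inl c) (Sum.inr ⟨m, j'⟩)) + k
      = k * k + 2 * k * (if c = m then 1 else 2) := by
  have h1 : ∀ j' : Fin (armLen a m), D (Sum.inl c) (Sum.inr ⟨m, j'⟩)
      = (j' : ℕ) + (if c = m then 1 else 2) := by
    intro j'; simp only [D]; split_ifs <;> omega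
  rw [Finset.sum_congr rfl fun j' _ => h1 j',
    Fin.sum_univ_eq_sum_range (fun x => x + (if c = m then 1 else 2)) (armLen a m), hk]
  exact sum_lin k _

lemma arm_cross_sum (a : ℕ) (i m : Fin 4) (j : Fin (armLen a i)) (hne : i ≠ m)
    (k : ℕ) (hk : armLen a m = k) :
    2 * (∑ j' : Fin (armLen a m), D (Sum.inr ⟨i, j⟩) (Sum.inr ⟨m, j'⟩)) + k
      = k * k + 2 * k * ((j : ℕ) + 3) := by
  have h1 : ∀ j' : Fin (armLen a m), D (Sum.inr (⟨i, j⟩ : Σ i, Fin (armLen a i))) (Sum.inr ⟨m, j'⟩)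
      = (j' : ℕ) + ((j : ℕ) + 3) := by
    intro j'; simp only [D, if_neg hne]; omega
  rw [Finset.sum_congr rfl fun j' _ => h1 j',
    Fin.sum_univ_eq_sum_range (fun x => x + ((j : ℕ) + 3)) (armLen a m), hk]
  exact sum_lin k _

lemma arm_own_sum (a : ℕ) (i : Fin 4) (j : Fin (armLen a i)) (k : ℕ) (hk : armLen a i = k) :
    2 * (∑ j' : Fin (armLen a i), D (Sum.inr ⟨i, j⟩) (Sum.inr ⟨i, j'⟩))
      = (j : ℕ) * ((j : ℕ) + 1) + (k - 1 - (j : ℕ)) * (k - (j : ℕ)) := by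
  have h1 : ∀ j' : Fin (armLen a i), D (Sum.inr (⟨i, j⟩ : Σ i, Fin (armLen a i))) (Sum.inr ⟨i, j'⟩)
      = ((j : ℕ) - (j' : ℕ)) + ((j' : ℕ) - (j : ℕ)) := by
    intro j'; simp [D]
  rw [Finset.sum_congr rfl fun j' _ => h1 j',
    Fin.sum_univ_eq_sum_range (fun x => ((j : ℕ) - x) + (x - (j : ℕ))) (armLen a i),
    show Finset.range (armLen a i) = Finset.range k from by rw [hk]]
  exact sum_absdiff k (j : ℕ) (hk ▸ j.isLt)

lemma arm_core_sum (a : ℕ) (i : Fin 4) (j : Fin (armLen a i)) :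
    (∑ c : Fin 4, D (Sum.inr (⟨i, j⟩ : Σ i, Fin (armLen a i))) (Sum.inl c)) = 4 * (j : ℕ) + 7 := by
  have h1 : ∀ c : Fin 4, D (Sum.inr (⟨i, j⟩ : Σ i, Fin (armLen a i))) (Sum.inl c)
      = ((j : ℕ) + 1) + (if c = i then 0 else 1) := fun c => rfl
  rw [Finset.sum_congr rfl (fun c _ => h1 c), Finset.sum_add_distrib, Finset.sum_const]
  simp only [Finset.card_univ, Fintype.card_fin, smul_eq_mul]
  have h2 : (∑ c : Fin 4, if c = i then (0 : ℕ) else 1) = 3 := by fin_cases i <;> decide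
  rw [h2]
  omega


lemma armLen0 (b : ℕ) : armLen (b+2) 0 = b := rfl
lemma armLen1 (b : ℕ) : armLen (b+2) 1 = b + 1 := rfl
lemma armLen2 (b : ℕ) : armLen (b+2) 2 = b + 3 := rfl
lemma armLen3 (b : ℕ) : armLen (b+2) 3 = b + 4 := rfl

lemma fin4_cases (i : Fin 4) : i = 0 ∨ i = 1 ∨ i = 2 ∨ i = 3 := by
  fin_cases i <;> simp

lemma tr_core (b : ℕ) (i : Fin 4) :
    2 * transmission (Kgraph (b+2)) (Sum.inl i) + 2 * armLen (b+2) i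
      = 4 * b ^ 2 + 28 * b + 56 := by
  have hA : (∑ c : Fin 4, D (a := b+2) (Sum.inl i) (Sum.inl c) : ℕ) = 3 := by
    have hA' : ∀ c : Fin 4, D (a := b+2) (Sum.inl i) (Sum.inl c)
        = if i = c then 0 else 1 := fun c => rfl
    rw [Finset.sum_congr rfl fun c _ => hA' c]
    fin_cases i <;> decide
  have h0 := core_arm_sum (b+2) i 0 b (armLen0 b)
  have h1 := core_arm_sum (b+2) i 1 (b+1) (armLen1 b)
  have h2 := core_arm_sum (b+2) i 2 (b+3) (armLen2 b)
  have h3 := core_arm_sum (b+2) i 3 (b+4) (armLen3 b)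
  have kz0 : ((armLen (b+2) 0 : ℕ) : ℤ) = (b : ℤ) := by rw [armLen0]
  have kz1 : ((armLen (b+2) 1 : ℕ) : ℤ) = ((b : ℤ) + 1) := by rw [armLen1]; push_cast; ring
  have kz2 : ((armLen (b+2) 2 : ℕ) : ℤ) = ((b : ℤ) + 3) := by rw [armLen2]; push_cast; ring
  have kz3 : ((armLen (b+2) 3 : ℕ) : ℤ) = ((b : ℤ) + 4) := by rw [armLen3]; push_cast; ring
  rw [trans_decomp, hA]
  rw [Fin.sum_univ_four (fun m => ∑ j' : Fin (armLen (b+2) m), D (Sum.inl i) (Sum.inr ⟨m, j'⟩))]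
  rcases fin4_cases i with rfl | rfl | rfl | rfl <;>
      simp at h0 h1 h2 h3 <;> zify at h0 h1 h2 h3 ⊢ <;>
    [linear_combination h0 + h1 + h2 + h3 + 2 * kz0;
     linear_combination h0 + h1 + h2 + h3 + 2 * kz1;
     linear_combination h0 + h1 + h2 + h3 + 2 * kz2;
     linear_combination h0 + h1 + h2 + h3 + 2 * kz3]

lemma tr_arm (b : ℕ) (i : Fin 4) (j : Fin (armLen (b+2) i)) :
    2 * transmission (Kgraph (b+2)) (Sum.inr ⟨i, j⟩) + 4 * armLen (b+2) i * ((j : ℕ) + 1)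
        + 2 * armLen (b+2) i
      = 4 * b ^ 2 + 28 * b + 56 + 2 * ((j : ℕ) + 1) ^ 2 + (8 * b + 22) * ((j : ℕ) + 1) := by
  have kz0 : ((armLen (b+2) 0 : ℕ) : ℤ) = (b : ℤ) := by rw [armLen0]
  have kz1 : ((armLen (b+2) 1 : ℕ) : ℤ) = ((b : ℤ) + 1) := by rw [armLen1]; push_cast; ring
  have kz2 : ((armLen (b+2) 2 : ℕ) : ℤ) = ((b : ℤ) + 3) := by rw [armLen2]; push_cast; ring
  have kz3 : ((armLen (b+2) 3 : ℕ) : ℤ) = ((b : ℤ) + 4) := by rw [armLen3]; push_cast; ring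
  rcases fin4_cases i with rfl | rfl | rfl | rfl
  · have hJ : (j : ℕ) < b := lt_of_lt_of_eq j.isLt (armLen0 b)
    obtain ⟨r, hr⟩ : ∃ r, b = (j : ℕ) + 1 + r := ⟨b - ((j : ℕ) + 1), by omega⟩
    have hown := arm_own_sum (b+2) 0 j b (armLen0 b)
    rw [show b - 1 - (j : ℕ) = r from by omega,
        show b - (j : ℕ) = r + 1 from by omega] at hown
    have hc1 := arm_cross_sum (b+2) 0 1 j (by decide) (b+1) (armLen1 b)
    have hc2 := arm_cross_sum (b+2) 0 2 j (by decide) (b+3) (armLen2 b)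
    have hc3 := arm_cross_sum (b+2) 0 3 j (by decide) (b+4) (armLen3 b)
    have hA := arm_core_sum (b+2) 0 j
    rw [trans_decomp, hA,
      Fin.sum_univ_four (fun m => ∑ j' : Fin (armLen (b+2) m), D (Sum.inr ⟨0, j⟩) (Sum.inr ⟨m, j'⟩))]
    zify at hown hc1 hc2 hc3 hr ⊢
    linear_combination hown + hc1 + hc2 + hc3 + (4 * (((j : ℕ) : ℤ) + 1) + 2) * kz0
      + (((j : ℕ) : ℤ) - (r : ℤ) - (b : ℤ)) * hr
  · have hJ : (j : ℕ) < (b+1) := lt_of_lt_of_eq j.isLt (armLen1 b)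
    obtain ⟨r, hr⟩ : ∃ r, (b+1) = (j : ℕ) + 1 + r := ⟨(b+1) - ((j : ℕ) + 1), by omega⟩
    have hown := arm_own_sum (b+2) 1 j (b+1) (armLen1 b)
    rw [show (b+1) - 1 - (j : ℕ) = r from by omega,
        show (b+1) - (j : ℕ) = r + 1 from by omega] at hown
    have hc0 := arm_cross_sum (b+2) 1 0 j (by decide) b (armLen0 b)
    have hc2 := arm_cross_sum (b+2) 1 2 j (by decide) (b+3) (armLen2 b)
    have hc3 := arm_cross_sum (b+2) 1 3 j (by decide) (b+4) (armLen3 b)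
    have hA := arm_core_sum (b+2) 1 j
    rw [trans_decomp, hA,
      Fin.sum_univ_four (fun m => ∑ j' : Fin (armLen (b+2) m), D (Sum.inr ⟨1, j⟩) (Sum.inr ⟨m, j'⟩))]
    zify at hown hc0 hc2 hc3 hr ⊢
    linear_combination hown + hc0 + hc2 + hc3 + (4 * (((j : ℕ) : ℤ) + 1) + 2) * kz1
      + (((j : ℕ) : ℤ) - (r : ℤ) - ((b : ℤ) + 1)) * hr
  · have hJ : (j : ℕ) < (b+3) := lt_of_lt_of_eq j.isLt (armLen2 b)
    obtain ⟨r, hr⟩ : ∃ r, (b+3) = (j : ℕ) + 1 + r := ⟨(b+3) - ((j : ℕ) + 1), by omega⟩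
    have hown := arm_own_sum (b+2) 2 j (b+3) (armLen2 b)
    rw [show (b+3) - 1 - (j : ℕ) = r from by omega,
        show (b+3) - (j : ℕ) = r + 1 from by omega] at hown
    have hc0 := arm_cross_sum (b+2) 2 0 j (by decide) b (armLen0 b)
    have hc1 := arm_cross_sum (b+2) 2 1 j (by decide) (b+1) (armLen1 b)
    have hc3 := arm_cross_sum (b+2) 2 3 j (by decide) (b+4) (armLen3 b)
    have hA := arm_core_sum (b+2) 2 j
    rw [trans_decomp, hA,
      Fin.sum_univ_four (fun m => ∑ j' : Fin (armLen (b+2) m), D (Sum.inr ⟨2, j⟩) (Sum.inr ⟨m, j'⟩))]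
    zify at hown hc0 hc1 hc3 hr ⊢
    linear_combination hown + hc0 + hc1 + hc3 + (4 * (((j : ℕ) : ℤ) + 1) + 2) * kz2
      + (((j : ℕ) : ℤ) - (r : ℤ) - ((b : ℤ) + 3)) * hr
  · have hJ : (j : ℕ) < (b+4) := lt_of_lt_of_eq j.isLt (armLen3 b)
    obtain ⟨r, hr⟩ : ∃ r, (b+4) = (j : ℕ) + 1 + r := ⟨(b+4) - ((j : ℕ) + 1), by omega⟩
    have hown := arm_own_sum (b+2) 3 j (b+4) (armLen3 b)
    rw [show (b+4) - 1 - (j : ℕ) = r from by omega,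
        show (b+4) - (j : ℕ) = r + 1 from by omega] at hown
    have hc0 := arm_cross_sum (b+2) 3 0 j (by decide) b (armLen0 b)
    have hc1 := arm_cross_sum (b+2) 3 1 j (by decide) (b+1) (armLen1 b)
    have hc2 := arm_cross_sum (b+2) 3 2 j (by decide) (b+3) (armLen2 b)
    have hA := arm_core_sum (b+2) 3 j
    rw [trans_decomp, hA,
      Fin.sum_univ_four (fun m => ∑ j' : Fin (armLen (b+2) m), D (Sum.inr ⟨3, j⟩) (Sum.inr ⟨m, j'⟩))]
    zify at hown hc0 hc1 hc2 hr ⊢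
    linear_combination hown + hc0 + hc1 + hc2 + (4 * (((j : ℕ) : ℤ) + 1) + 2) * kz3
      + (((j : ℕ) : ℤ) - (r : ℤ) - ((b : ℤ) + 4)) * hr

lemma key_gt (b k k' d d' : ℤ) (hb : 0 ≤ b) (h3 : b % 3 ≠ 0)
    (hk : k = b ∨ k = b + 1 ∨ k = b + 3 ∨ k = b + 4)
    (hk' : k' = b ∨ k' = b + 1 ∨ k' = b + 3 ∨ k' = b + 4)
    (hd0' : 0 ≤ d') (hd : d ≤ k) (hd' : d' ≤ k') (hgt : d' < d)
    (heq : 2*d^2 + (8*b+22)*d + 4*k'*d' + 2*k' = 2*d'^2 + (8*b+22)*d' + 4*k*d + 2*k) :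
    False := by
  obtain ⟨e, he1, rfl⟩ : ∃ e, 1 ≤ e ∧ d = d' + e := ⟨d - d', by omega, by ring⟩
  have heq' : 4*d'*e + 2*e^2 + (8*b+22)*e + 4*k'*d' + 2*k' = 4*k*d' + 4*k*e + 2*k := by
    linear_combination heq
  rcases hk with rfl | rfl | rfl | rfl <;> rcases hk' with rfl | rfl | rfl | rfl <;>
  · have he3 : e ≤ 3 := by
      by_contra h4
      push_neg at h4
      nlinarith [mul_nonneg (by linarith : (0:ℤ) ≤ e - 4) hd0',
                 mul_nonneg (by linarith : (0:ℤ) ≤ e - 4) hb,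
                 mul_nonneg (by linarith : (0:ℤ) ≤ e - 4) (by linarith : (0:ℤ) ≤ e)]
    interval_cases e <;> (ring_nf at heq'; omega)

lemma key (b k k' d d' T T' C : ℤ) (hb : 0 ≤ b) (h3 : b % 3 ≠ 0)
    (hk : k = b ∨ k = b + 1 ∨ k = b + 3 ∨ k = b + 4)
    (hk' : k' = b ∨ k' = b + 1 ∨ k' = b + 3 ∨ k' = b + 4)
    (hd0 : 0 ≤ d) (hd0' : 0 ≤ d') (hd : d ≤ k) (hd' : d' ≤ k')
    (e1 : 2 * T + 4 * k * d + 2 * k = C + 2 * d ^ 2 + (8 * b + 22) * d)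
    (e2 : 2 * T' + 4 * k' * d' + 2 * k' = C + 2 * d' ^ 2 + (8 * b + 22) * d')
    (hT : T = T') : d = d' ∧ k = k' := by
  have heq : 2*d^2 + (8*b+22)*d + 4*k'*d' + 2*k' = 2*d'^2 + (8*b+22)*d' + 4*k*d + 2*k := by
    linear_combination e2 - e1 + 2 * hT
  rcases lt_trichotomy d d' with hlt | rfl | hgt
  · exact absurd (key_gt b k' k d' d hb h3 hk' hk hd0 hd' hd hlt (by linear_combination -heq)) id
  · refine ⟨rfl, ?_⟩
    rcases hk with rfl | rfl | rfl | rfl <;> rcases hk' with rfl | rfl | rfl | rfl <;>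
      first | rfl | linarith
  · exact absurd (key_gt b k k' d d' hb h3 hk hk' hd0' hd hd' hgt heq) id

def idxOf : KVert a → Fin 4
  | .inl c => c
  | .inr q => q.1

def depth : KVert a → ℕ
  | .inl _ => 0
  | .inr q => (q.2 : ℕ) + 1

lemma depth_le (v : KVert a) : depth v ≤ armLen a (idxOf v) := by
  rcases v with c | ⟨i, j⟩
  · simp [depth]
  · simp only [depth, idxOf]
    exact j.isLt

lemma eq_of_idx_depth {v w : KVert a} (h1 : idxOf v = idxOf w) (h2 : depth v = depth w) :
    v = w := by
  rcases v with c | ⟨i, j⟩ <;> rcases w with c' | ⟨i', j'⟩ <;>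
      simp only [idxOf, depth] at h1 h2
  · rw [h1]
  · omega
  · omega
  · subst h1
    simp only [Sum.inr.injEq, Sigma.mk.inj_iff, heq_eq_eq, true_and]
    exact Fin.ext (by omega)

lemma armLen_cases (b : ℕ) (i : Fin 4) :
    armLen (b+2) i = b ∨ armLen (b+2) i = b + 1 ∨ armLen (b+2) i = b + 3 ∨
      armLen (b+2) i = b + 4 := by
  rcases fin4_cases i with rfl | rfl | rfl | rfl
  exacts [Or.inl (armLen0 b), Or.inr (Or.inl (armLen1 b)),
    Or.inr (Or.inr (Or.inl (armLen2 b))), Or.inr (Or.inr (Or.inr (armLen3 b)))]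

lemma armLen_inj (b : ℕ) (i i' : Fin 4) (h : armLen (b+2) i = armLen (b+2) i') : i = i' := by
  rcases fin4_cases i with rfl | rfl | rfl | rfl <;>
      rcases fin4_cases i' with rfl | rfl | rfl | rfl <;>
      simp only [armLen0, armLen1, armLen2, armLen3] at h <;>
      first | rfl | omega

lemma tr_eq (b : ℕ) (v : KVert (b+2)) :
    2 * transmission (Kgraph (b+2)) v + 4 * armLen (b+2) (idxOf v) * depth v
        + 2 * armLen (b+2) (idxOf v)
      = 4 * b ^ 2 + 28 * b + 56 + 2 * (depth v) ^ 2 + (8 * b + 22) * (depth v) := by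
  rcases v with c | ⟨i, j⟩
  · simpa [depth, idxOf] using tr_core b c
  · simpa [depth, idxOf] using tr_arm b i j

lemma key_nat (b k k' d d' T : ℕ) (h3 : b % 3 ≠ 0)
    (hk : k = b ∨ k = b + 1 ∨ k = b + 3 ∨ k = b + 4)
    (hk' : k' = b ∨ k' = b + 1 ∨ k' = b + 3 ∨ k' = b + 4)
    (hd : d ≤ k) (hd' : d' ≤ k')
    (e1 : 2 * T + 4 * k * d + 2 * k
      = 4 * b ^ 2 + 28 * b + 56 + 2 * d ^ 2 + (8 * b + 22) * d)
    (e2 : 2 * T + 4 * k' * d' + 2 * k'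
      = 4 * b ^ 2 + 28 * b + 56 + 2 * d' ^ 2 + (8 * b + 22) * d') :
    d = d' ∧ k = k' := by
  have hkz : (k:ℤ) = (b:ℤ) ∨ (k:ℤ) = (b:ℤ) + 1 ∨ (k:ℤ) = (b:ℤ) + 3 ∨ (k:ℤ) = (b:ℤ) + 4 := by
    rcases hk with rfl | rfl | rfl | rfl <;> push_cast <;> tauto
  have hkz' : (k':ℤ) = (b:ℤ) ∨ (k':ℤ) = (b:ℤ) + 1 ∨ (k':ℤ) = (b:ℤ) + 3 ∨ (k':ℤ) = (b:ℤ) + 4 := by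
    rcases hk' with rfl | rfl | rfl | rfl <;> push_cast <;> tauto
  have h3z : (b:ℤ) % 3 ≠ 0 := by omega
  zify at e1 e2 hd hd'
  obtain ⟨h1, h2⟩ := key (b:ℤ) (k:ℤ) (k':ℤ) (d:ℤ) (d':ℤ) (T:ℤ) (T:ℤ)
    (4 * (b:ℤ) ^ 2 + 28 * (b:ℤ) + 56) (Int.natCast_nonneg b) h3z hkz hkz'
    (Int.natCast_nonneg d) (Int.natCast_nonneg d') hd hd'
    (by linear_combination e1) (by linear_combination e2) rfl
  exact ⟨by exact_mod_cast h1, by exact_mod_cast h2⟩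

lemma inj_of (b : ℕ) (h3 : b % 3 ≠ 0) :
    Function.Injective (transmission (Kgraph (b+2))) := by
  intro x y hxy
  have e1 := tr_eq b x
  rw [hxy] at e1
  obtain ⟨hdd, hkk⟩ := key_nat b (armLen (b+2) (idxOf x)) (armLen (b+2) (idxOf y))
    (depth x) (depth y) (transmission (Kgraph (b+2)) y) h3
    (armLen_cases b (idxOf x)) (armLen_cases b (idxOf y))
    (depth_le x) (depth_le y) e1 (tr_eq b y)
  exact eq_of_idx_depth (armLen_inj b _ _ hkk) hdd

lemma noninj (m : ℕ) :
    ¬ Function.Injective (transmission (Kgraph (3 * m + 2))) := by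
  rcases Nat.eq_zero_or_pos m with rfl | hm1
  · -- m = 0 : core vertex 0 collides with first vertex of arm 3
    intro hinj
    have hv : (0 : ℕ) < armLen (3 * 0 + 2) 3 := by rw [armLen3]; omega
    have e1 := tr_core (3 * 0) 0
    have e2 := tr_arm (3 * 0) 3 ⟨0, hv⟩
    have k0 : armLen (3 * 0 + 2) 0 = 3 * 0 := armLen0 (3 * 0)
    have k3 : armLen (3 * 0 + 2) 3 = 3 * 0 + 4 := armLen3 (3 * 0)
    have hval : ((⟨0, hv⟩ : Fin (armLen (3 * 0 + 2) 3)) : ℕ) = 0 := rfl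
    rw [hval] at e2
    have hTr : transmission (Kgraph (3 * 0 + 2)) (Sum.inl 0)
        = transmission (Kgraph (3 * 0 + 2)) (Sum.inr ⟨3, ⟨0, hv⟩⟩) := by
      ring_nf at e1 e2 k0 k3 ⊢
      omega
    have := hinj hTr
    simp at this
  · -- m ≥ 1 : vertex (0, m-1) collides with (3, m)
    intro hinj
    have hum : m - 1 < armLen (3 * m + 2) 0 := by rw [armLen0]; omega
    have hvm : m < armLen (3 * m + 2) 3 := by rw [armLen3]; omega
    have e1 := tr_arm (3 * m) 0 ⟨m - 1, hum⟩
    have e2 := tr_arm (3 * m) 3 ⟨m, hvm⟩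
    have hval1 : ((⟨m - 1, hum⟩ : Fin (armLen (3 * m + 2) 0)) : ℕ) = m - 1 := rfl
    have hval2 : ((⟨m, hvm⟩ : Fin (armLen (3 * m + 2) 3)) : ℕ) = m := rfl
    rw [hval1, show m - 1 + 1 = m from by omega] at e1
    rw [hval2] at e2
    have kz0 : ((armLen (3 * m + 2) 0 : ℕ) : ℤ) = 3 * (m : ℤ) := by
      rw [armLen0]; push_cast; ring
    have kz3 : ((armLen (3 * m + 2) 3 : ℕ) : ℤ) = 3 * (m : ℤ) + 4 := by
      rw [armLen3]; push_cast; ring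
    zify at e1 e2
    have hTr : transmission (Kgraph (3 * m + 2)) (Sum.inr ⟨0, ⟨m - 1, hum⟩⟩)
        = transmission (Kgraph (3 * m + 2)) (Sum.inr ⟨3, ⟨m, hvm⟩⟩) := by
      have h2T : 2 * (transmission (Kgraph (3 * m + 2)) (Sum.inr ⟨0, ⟨m - 1, hum⟩⟩) : ℤ)
          = 2 * (transmission (Kgraph (3 * m + 2)) (Sum.inr ⟨3, ⟨m, hvm⟩⟩) : ℤ) := by
        linear_combination e1 - e2 - (4 * (m:ℤ) + 2) * kz0 + (4 * (m:ℤ) + 6) * kz3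
      omega
    have := hinj hTr
    simp at this

end KP

/-- For `a ≥ 2`, the graph `K₄(a-2, a-1, a+1, a+2)` is transmission irregular
if and only if `a ≢ 2 (mod 3)`. -/
theorem stmt_12 (a : ℕ) (ha : 2 ≤ a) :
    Function.Injective (transmission (Kgraph a)) ↔ a % 3 ≠ 2 := by
  obtain ⟨b, rfl⟩ : ∃ b, a = b + 2 := ⟨a - 2, by omega⟩
  constructor
  · intro hinj hmod
    obtain ⟨m, rfl⟩ : ∃ m, b = 3 * m := ⟨b / 3, by omega⟩
    exact KP.noninj m hinj
  · intro hmod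
    exact KP.inj_of b (by omega)
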